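/- Let G be an infinite group of cardinality κ, and suppose κ is a regular cardinal. Then G admits no maximal left invariant κ-bounded topology; that is, there is no topology τ on G such that (G, τ) is left topological, every nonempty τ-open set is left κ-large, τ has no isolated points, and every topology strictly finer than τ has an isolated point. -/

import Mathlib

open scoped Pointwise
open Cardinal

universe u

variable {G : Type u}

/-- `A` is left `κ`-large: `G = F * A` for some `F` with `|F| < κ`. -/
def LeftLarge [Group G] (κ : Cardinal.{u}) (A : Set G) : Prop :=
  ∃ F : Set G, #F < κ ∧ F * A = Set.univ

/-- `A` is right `κ`-large: `G = A * F` for some `F` with `|F| < κ`. -/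
def RightLarge [Group G] (κ : Cardinal.{u}) (A : Set G) : Prop :=
  ∃ F : Set G, #F < κ ∧ A * F = Set.univ

/-- `A` is `κ`-large: `G = F * A * F` for some `F` with `|F| < κ`. -/
def KLarge [Group G] (κ : Cardinal.{u}) (A : Set G) : Prop :=
  ∃ F : Set G, #F < κ ∧ F * A * F = Set.univ

/-- `A` is left `κ`-thick: for every `F` with `|F| < κ` there is `a ∈ A` with `F * a ⊆ A`. -/
def LeftThick [Group G] (κ : Cardinal.{u}) (A : Set G) : Prop :=
  ∀ F : Set G, #F < κ → ∃ a ∈ A, F * {a} ⊆ A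

/-- `A` is right `κ`-thick: for every `F` with `|F| < κ` there is `a ∈ A` with `a * F ⊆ A`. -/
def RightThick [Group G] (κ : Cardinal.{u}) (A : Set G) : Prop :=
  ∀ F : Set G, #F < κ → ∃ a ∈ A, {a} * F ⊆ A

/-- `A` is `κ`-thick: for every `F` with `|F| < κ` there is `a ∈ A` with `F * a * F ⊆ A`. -/
def KThick [Group G] (κ : Cardinal.{u}) (A : Set G) : Prop :=
  ∀ F : Set G, #F < κ → ∃ a ∈ A, F * {a} * F ⊆ A

/-- `G` is `κ`-normal: every subset of size `< κ` lies in a normal subgroup of size `< κ`. -/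
def KNormal (G : Type u) [Group G] (κ : Cardinal.{u}) : Prop :=
  ∀ F : Set G, #F < κ → ∃ H : Subgroup G, H.Normal ∧ #(H : Set G) < κ ∧ F ⊆ (H : Set G)

/-- `κ` is a singular cardinal: infinite, with cofinality strictly less than `κ`. -/
def Singular (κ : Cardinal.{u}) : Prop := ℵ₀ ≤ κ ∧ κ.ord.cof < κ

/-- A topology on a group is left invariant if all left shifts are continuous. -/
def LeftInvariant [Group G] (τ : TopologicalSpace G) : Prop :=
  ∀ g : G, @Continuous G G τ τ fun x => g * x

/-- A topology on a group of cardinality `κ` is `κ`-bounded if every nonempty open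
set is left `κ`-large. -/
def KBounded [Group G] (κ : Cardinal.{u}) (τ : TopologicalSpace G) : Prop :=
  ∀ U : Set G, τ.IsOpen U → U.Nonempty → LeftLarge κ U

/-- A topology has no isolated points if no singleton is open. -/
def NoIsolatedPoints (τ : TopologicalSpace G) : Prop :=
  ∀ x : G, ¬ τ.IsOpen {x}

/-- A topology (with no isolated points) is maximal if every strictly finer topology
has an isolated point (an open singleton). -/
def MaximalTopology (τ : TopologicalSpace G) : Prop :=
  ∀ τ' : TopologicalSpace G,
    (∀ U : Set G, τ.IsOpen U → τ'.IsOpen U) →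
    (∃ V : Set G, τ'.IsOpen V ∧ ¬ τ.IsOpen V) →
    ∃ x : G, τ'.IsOpen {x}

open Ordinal in
private theorem exists_thick_partition {G : Type u} [Group G] (κ : Cardinal.{u})
    (hκ : #G = κ) (hreg : κ.IsRegular) :
    ∃ A : Set G, LeftThick κ A ∧ LeftThick κ Aᶜ := by
  classical
  obtain ⟨r, wo, hType⟩ := Cardinal.ord_eq G
  have hTypeκ : type r = κ.ord := by rw [← hType, hκ]
  -- the "initial segment" sets
  set E : G → Set G := fun x => insert 1 {y | r y x} with hEdef
  have hseg : ∀ x : G, #{y | r y x} < κ := by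
    intro x
    have h1 : #{y // r y x} = (typein r x).card := card_typein x
    have h2 : typein r x < κ.ord := hTypeκ ▸ typein_lt_type r x
    have := Cardinal.lt_ord.1 h2
    exact h1 ▸ this
  have hEcard : ∀ x : G, #(E x) < κ := by
    intro x
    refine lt_of_le_of_lt Cardinal.mk_insert_le ?_
    exact Cardinal.add_lt_of_lt hreg.aleph0_le (hseg x)
      (Cardinal.one_lt_aleph0.trans_le hreg.aleph0_le)
  have hEone : ∀ x : G, (1 : G) ∈ E x := fun x => Set.mem_insert _ _
  have hEmono : ∀ {x y : G}, r x y → E x ⊆ E y := by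
    intro x y hxy z hz
    rcases hz with hz | hz
    · exact Or.inl hz
    · exact Or.inr (trans_of r hz hxy)
  -- boundedness: every small set is contained in some E x
  have hbound : ∀ F : Set G, #F < κ → ∃ x : G, F ⊆ E x := by
    intro F hF
    have hcof : #F < (type r).cof := by
      rw [hTypeκ, hreg.cof_eq]; exact hF
    have hlim : Order.IsSuccLimit (type r) := hTypeκ ▸ Cardinal.isSuccLimit_ord hreg.aleph0_le
    have hsup : (⨆ y : F, Order.succ (typein r (y : G))) < type r := by
      refine Ordinal.iSup_lt_ord hcof fun y => ?_
      exact hlim.succ_lt (typein_lt_type r _)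
    obtain ⟨x, hx⟩ := typein_surj r hsup
    refine ⟨x, fun y hy => ?_⟩
    have h1 : typein r y < typein r x := by
      rw [hx]
      exact lt_of_lt_of_le (Order.lt_succ _)
        (Ordinal.le_iSup (fun y : F => Order.succ (typein r (y : G))) ⟨y, hy⟩)
    exact Or.inr ((typein_lt_typein r).1 h1)
  -- a choice function avoiding small sets
  have hex : ∀ S : Set G, #S < κ → ∃ g : G, g ∉ S := by
    intro S hS
    by_contra h
    push_neg at h
    have : S = Set.univ := Set.eq_univ_of_forall h
    rw [this, Cardinal.mk_univ, hκ] at hS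
    exact lt_irrefl _ hS
  set pick : Set G → G := fun S => if h : ∃ g : G, g ∉ S then h.choose else 1 with hpickdef
  have hpick : ∀ S : Set G, #S < κ → pick S ∉ S := by
    intro S hS
    have h := hex S hS
    simp only [hpickdef, dif_pos h]
    exact h.choose_spec
  -- cardinality of pointwise products
  have hmulcard : ∀ S T : Set G, #S < κ → #T < κ → #(S * T) < κ := by
    intro S T hS hT
    have : #(S * T) ≤ #S * #T := by
      rw [← Set.image2_mul]; exact Cardinal.mk_image2_le
    exact lt_of_le_of_lt this (Cardinal.mul_lt_of_lt hreg.aleph0_le hS hT)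
  have hinvcard : ∀ S : Set G, #S < κ → #↥(S⁻¹) < κ := by
    intro S hS
    have : #↥(S⁻¹) ≤ #S := by rw [← Set.image_inv_eq_inv]; exact Cardinal.mk_image_le
    exact lt_of_le_of_lt this hS
  -- the transfinite recursion
  have wf : WellFounded r := wo.wf
  set Fb : ∀ x : G, (∀ y : G, r y x → G × G) → Set G := fun x IH =>
    (E x)⁻¹ * (E x * Set.range fun p : {y // r y x} => (IH p.1 p.2).2) with hFbdef
  set body : ∀ x : G, (∀ y : G, r y x → G × G) → G × G := fun x IH =>
    (pick (Fb x IH),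
      pick ((E x)⁻¹ * (E x * insert (pick (Fb x IH))
        (Set.range fun p : {y // r y x} => (IH p.1 p.2).1)))) with hbodydef
  set f : G → G × G := wf.fix body with hfdef
  have hfeq : ∀ x : G, f x = body x fun y _ => f y := fun x => wf.fix_eq body x
  set a : G → G := fun x => (f x).1 with hadef
  set b : G → G := fun x => (f x).2 with hbdef
  set Sb : G → Set G := fun x =>
    (E x)⁻¹ * (E x * Set.range fun p : {y // r y x} => b p.1) with hSbdef
  set Sa : G → Set G := fun x =>
    (E x)⁻¹ * (E x * insert (a x) (Set.range fun p : {y // r y x} => a p.1)) with hSadef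
  have hax : ∀ x, a x = pick (Sb x) := by
    intro x
    rw [hadef]
    simp only [hfeq x, hbodydef, hFbdef]
    rfl
  have hbx : ∀ x, b x = pick (Sa x) := by
    intro x
    rw [hbdef]
    simp only [hfeq x, hbodydef, hFbdef]
    rw [hSadef]
    simp only [hax x, hSbdef]
    rfl
  have hrange : ∀ (x : G) (g : {y // r y x} → G), #(Set.range g) < κ := by
    intro x g
    refine lt_of_le_of_lt Cardinal.mk_range_le ?_
    exact hseg x
  have hSbcard : ∀ x, #(Sb x) < κ := by
    intro x
    exact hmulcard _ _ (hinvcard _ (hEcard x)) (hmulcard _ _ (hEcard x) (hrange x _))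
  have hSacard : ∀ x, #(Sa x) < κ := by
    intro x
    refine hmulcard _ _ (hinvcard _ (hEcard x)) (hmulcard _ _ (hEcard x) ?_)
    refine lt_of_le_of_lt Cardinal.mk_insert_le ?_
    exact Cardinal.add_lt_of_lt hreg.aleph0_le (hrange x _)
      (Cardinal.one_lt_aleph0.trans_le hreg.aleph0_le)
  have hanotin : ∀ x, a x ∉ Sb x := fun x => (hax x) ▸ hpick _ (hSbcard x)
  have hbnotin : ∀ x, b x ∉ Sa x := fun x => (hbx x) ▸ hpick _ (hSacard x)
  -- the two sets
  set A : Set G := ⋃ x : G, E x * {a x} with hAdef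
  set B : Set G := ⋃ x : G, E x * {b x} with hBdef
  -- disjointness
  have hdisj : ∀ z : G, z ∈ A → z ∈ B → False := by
    intro z hzA hzB
    obtain ⟨_, ⟨x, rfl⟩, hzx⟩ := hzA
    obtain ⟨_, ⟨y, rfl⟩, hzy⟩ := hzB
    obtain ⟨d, hd, c, hc, hdc⟩ := hzx
    obtain ⟨e, he, c', hc', hec⟩ := hzy
    rw [Set.mem_singleton_iff] at hc hc'
    subst hc; subst hc'
    rcases trichotomous_of r x y with hxy | hxy | hxy
    · -- r x y : b y lands in Sa y
      refine hbnotin y ?_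
      have hz' : z ∈ E y * insert (a y) (Set.range fun p : {y' // r y' y} => a p.1) := by
        rw [← hdc]
        refine Set.mul_mem_mul (hEmono hxy hd) ?_
        exact Set.mem_insert_iff.2 (Or.inr ⟨⟨x, hxy⟩, rfl⟩)
      have : b y = e⁻¹ * z := by rw [← hec]; group
      rw [this]
      exact Set.mul_mem_mul (Set.inv_mem_inv.2 he) hz'
    · subst hxy
      refine hbnotin x ?_
      have hz' : z ∈ E x * insert (a x) (Set.range fun p : {y' // r y' x} => a p.1) := by
        rw [← hdc]
        exact Set.mul_mem_mul hd (Set.mem_insert _ _)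
      have : b x = e⁻¹ * z := by rw [← hec]; group
      rw [this]
      exact Set.mul_mem_mul (Set.inv_mem_inv.2 he) hz'
    · -- r y x : a x lands in Sb x
      refine hanotin x ?_
      have hz' : z ∈ E x * Set.range fun p : {y' // r y' x} => b p.1 := by
        rw [← hec]
        exact Set.mul_mem_mul (hEmono hxy he) ⟨⟨y, hxy⟩, rfl⟩
      have : a x = d⁻¹ * z := by rw [← hdc]; group
      rw [this]
      exact Set.mul_mem_mul (Set.inv_mem_inv.2 hd) hz'
  refine ⟨A, ?_, ?_⟩
  · intro F hF
    obtain ⟨x, hx⟩ := hbound F hF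
    refine ⟨a x, ?_, ?_⟩
    · exact Set.mem_iUnion.2 ⟨x, ⟨1, hEone x, a x, rfl, one_mul _⟩⟩
    · intro z hz
      refine Set.mem_iUnion.2 ⟨x, ?_⟩
      exact Set.mul_subset_mul_right hx hz
  · intro F hF
    obtain ⟨x, hx⟩ := hbound F hF
    have hBsub : E x * {b x} ⊆ Aᶜ := by
      intro z hz hzA
      exact hdisj z hzA (Set.mem_iUnion.2 ⟨x, hz⟩)
    refine ⟨b x, ?_, ?_⟩
    · exact hBsub ⟨1, hEone x, b x, rfl, one_mul _⟩
    · intro z hz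
      exact hBsub (Set.mul_subset_mul_right hx hz)

private theorem aux_leftLarge_mono {G : Type u} [Group G] {κ : Cardinal.{u}} {S T : Set G}
    (hST : S ⊆ T) (h : LeftLarge κ S) : LeftLarge κ T := by
  obtain ⟨F, hF, hcov⟩ := h
  refine ⟨F, hF, Set.eq_univ_of_univ_subset ?_⟩
  rw [← hcov]
  exact Set.mul_subset_mul_left hST

private theorem aux_thick_meets_large {G : Type u} [Group G] {κ : Cardinal.{u}} {T L : Set G}
    (hT : LeftThick κ T) (hL : LeftLarge κ L) : ∃ z, z ∈ T ∧ z ∈ L := by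
  obtain ⟨F, hF, hcov⟩ := hL
  have hFinv : #↥(F⁻¹) < κ := by
    refine lt_of_le_of_lt ?_ hF
    rw [← Set.image_inv_eq_inv]; exact Cardinal.mk_image_le
  obtain ⟨t, htT, hsub⟩ := hT F⁻¹ hFinv
  have ht : t ∈ F * L := hcov ▸ Set.mem_univ t
  obtain ⟨g, hg, l, hl, hgl⟩ := ht
  refine ⟨l, ?_, hl⟩
  have : l = g⁻¹ * t := by rw [← hgl]; group
  rw [this]
  exact hsub (Set.mul_mem_mul (Set.inv_mem_inv.2 hg) rfl)


/-- An infinite group of regular cardinality `κ` admits no maximal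
left invariant `κ`-bounded topology (without isolated points). -/
theorem no_maximal_kBounded_topology_of_regular {G : Type u} [Group G] [Infinite G]
    (κ : Cardinal.{u}) (hκ : #G = κ) (hreg : κ.IsRegular) :
    ¬ ∃ τ : TopologicalSpace G, LeftInvariant τ ∧ KBounded κ τ ∧
        NoIsolatedPoints τ ∧ MaximalTopology τ := by
  classical
  rintro ⟨τ, _hinv, hbd, hni, hmax⟩
  obtain ⟨A, hA, hAc⟩ := exists_thick_partition κ hκ hreg
  -- punctured open sets are large
  have hdiff : ∀ (U : Set G) (x : G), τ.IsOpen U → U.Nonempty → LeftLarge κ (U \ {x}) := by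
    intro U x hop hne
    by_cases hxU : x ∈ U
    · have hU2 : ∃ u' ∈ U, u' ≠ x := by
        by_contra h
        push_neg at h
        have : U = {x} := Set.eq_singleton_iff_unique_mem.2 ⟨hxU, h⟩
        exact hni x (this ▸ hop)
      obtain ⟨u', hu', hu'x⟩ := hU2
      obtain ⟨F, hF, hcov⟩ := hbd U hop hne
      refine ⟨F ∪ (fun f => f * (x * u'⁻¹)) '' F, ?_, ?_⟩
      · refine lt_of_le_of_lt (Cardinal.mk_union_le _ _) ?_
        exact Cardinal.add_lt_of_lt hreg.aleph0_le hF
          (lt_of_le_of_lt Cardinal.mk_image_le hF)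
      · refine Set.eq_univ_of_forall fun g => ?_
        have hg : g ∈ F * U := hcov ▸ Set.mem_univ g
        obtain ⟨f, hf, u, hu, hfu⟩ := hg
        by_cases hux : u = x
        · refine ⟨f * (x * u'⁻¹), Or.inr ⟨f, hf, rfl⟩, u', ⟨hu', hu'x⟩, ?_⟩
          rw [← hfu, hux]; group
        · exact ⟨f, Or.inl hf, u, ⟨hu, hux⟩, hfu⟩
    · rw [Set.diff_singleton_eq_self hxU]
      exact hbd U hop hne
  -- A is not τ-open
  have hAne : ∃ a, a ∈ A := by
    obtain ⟨a, ha, -⟩ := hA ∅ (by rw [Cardinal.mk_emptyCollection]; exact hreg.pos)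
    exact ⟨a, ha⟩
  have hAnotopen : ¬ τ.IsOpen A := by
    intro hop
    obtain ⟨a, ha⟩ := hAne
    obtain ⟨z, hz1, hz2⟩ := aux_thick_meets_large hAc (hbd A hop ⟨a, ha⟩)
    exact hz1 hz2
  -- the refined topology
  set S : Set (Set G) := insert A (insert Aᶜ {U | τ.IsOpen U}) with hSdef
  set τ' : TopologicalSpace G := TopologicalSpace.generateFrom S with hτ'def
  set C : G → Set G := fun x => if x ∈ A then A else Aᶜ with hCdef
  have hxC : ∀ x : G, x ∈ C x := by
    intro x
    by_cases h : x ∈ A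
    · simp [hCdef, h]
    · simp [hCdef, h]
  have hCthick : ∀ x : G, LeftThick κ (C x) := by
    intro x
    by_cases h : x ∈ A
    · simp only [hCdef, if_pos h]; exact hA
    · simp only [hCdef, if_neg h]; exact hAc
  have hCcthick : ∀ x : G, LeftThick κ ((C x)ᶜ) := by
    intro x
    by_cases h : x ∈ A
    · simp only [hCdef, if_pos h]; exact hAc
    · simp only [hCdef, if_neg h, compl_compl]; exact hA
  have key : ∀ V : Set G, τ'.IsOpen V →
      ∀ x ∈ V, ∃ U : Set G, τ.IsOpen U ∧ x ∈ U ∧ U ∩ C x ⊆ V := by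
    intro V hV
    change TopologicalSpace.GenerateOpen S V at hV
    induction hV with
    | basic s hs =>
      intro x hx
      rcases hs with hs | hs
      · refine ⟨Set.univ, τ.isOpen_univ, Set.mem_univ x, ?_⟩
        have hx' : x ∈ A := hs ▸ hx
        have hC : C x = A := by simp only [hCdef, if_pos hx']
        rw [hC, hs]
        exact fun z hz => hz.2
      · rcases hs with hs | hs
        · refine ⟨Set.univ, τ.isOpen_univ, Set.mem_univ x, ?_⟩
          have hx' : x ∈ Aᶜ := hs ▸ hx
          have hC : C x = Aᶜ := by simp only [hCdef, if_neg hx']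
          rw [hC, hs]
          exact fun z hz => hz.2
        · exact ⟨s, hs, hx, fun z hz => hz.1⟩
    | univ => exact fun x _ => ⟨Set.univ, τ.isOpen_univ, Set.mem_univ x, fun z _ => Set.mem_univ z⟩
    | inter s t _ _ ihs iht =>
      intro x hx
      obtain ⟨U1, hU1, hxU1, hsub1⟩ := ihs x hx.1
      obtain ⟨U2, hU2, hxU2, hsub2⟩ := iht x hx.2
      refine ⟨U1 ∩ U2, τ.isOpen_inter _ _ hU1 hU2, ⟨hxU1, hxU2⟩, fun z hz => ?_⟩
      exact ⟨hsub1 ⟨hz.1.1, hz.2⟩, hsub2 ⟨hz.1.2, hz.2⟩⟩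
    | sUnion T _ ih =>
      intro x hx
      obtain ⟨t, htT, hxt⟩ := hx
      obtain ⟨U, hU, hxU, hsub⟩ := ih t htT x hxt
      exact ⟨U, hU, hxU, fun z hz => ⟨t, htT, hsub hz⟩⟩
  -- apply maximality
  have hfiner : ∀ U : Set G, τ.IsOpen U → τ'.IsOpen U := by
    intro U hU
    exact TopologicalSpace.GenerateOpen.basic U (Or.inr (Or.inr hU))
  have hstrict : ∃ V : Set G, τ'.IsOpen V ∧ ¬ τ.IsOpen V := by
    exact ⟨A, TopologicalSpace.GenerateOpen.basic A (Or.inl rfl), hAnotopen⟩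
  obtain ⟨x, hx⟩ := hmax τ' hfiner hstrict
  obtain ⟨U, hU, hxU, hsub⟩ := key {x} hx x rfl
  have hlarge : LeftLarge κ ((C x)ᶜ) := by
    refine aux_leftLarge_mono ?_ (hdiff U x hU ⟨x, hxU⟩)
    intro y hy
    intro hyC
    exact hy.2 (hsub ⟨hy.1, hyC⟩)
  obtain ⟨z, hz1, hz2⟩ := aux_thick_meets_large (hCthick x) hlarge
  exact hz2 hz1
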